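/- Let G : [0,1] → ℝ be a non-decreasing convex function, and let z_{-M-1} = 0 ≤ z_{-M} ≤ z_{-M+1} ≤ ... ≤ z_M ≤ z_{M+1} = 1 be points such that for each i with −M ≤ i ≤ M, g_i is a subgradient of G at z_i, where g_i is non-decreasing in i. Define the piecewise-linear function Ĝ with Ĝ(z_{-M-1}) = Ĝ(z_{-M}) = G(0) = 0, Ĝ(z_{i+1}) = Ĝ(z_i) + g_i·(z_{i+1} − z_i), extended by linear interpolation between consecutive z_i's. Then (1) Ĝ(x) ≤ G(x) for all x ∈ [0,1], and (2) the function x ↦ G(x) − Ĝ(x) is non-decreasing on [0,1]. -/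
import Mathlib


/-- The piecewise-linear function `Ghat` built from subgradients of a
non-decreasing convex function `G` at points `z i` is (1) a pointwise lower bound for
`G` on `[0,1]`, and (2) the difference `G − Ghat` is non-decreasing on `[0,1]`. -/
theorem piecewise_linear_lower_envelope (M : ℕ) (G Ghat : ℝ → ℝ) (z g : ℤ → ℝ)
    (hG0 : G 0 = 0)
    (hGmono : MonotoneOn G (Set.Icc (0 : ℝ) 1))
    (hGconv : ConvexOn ℝ (Set.Icc (0 : ℝ) 1) G)
    -- breakpoints
    (hzfirst : z (-(M : ℤ) - 1) = 0) (hzlast : z ((M : ℤ) + 1) = 1)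
    (hzmono : ∀ i j : ℤ, -(M : ℤ) - 1 ≤ i → i ≤ j → j ≤ (M : ℤ) + 1 → z i ≤ z j)
    -- g i is a subgradient of G at z i, for -M ≤ i ≤ M
    (hsub : ∀ i : ℤ, -(M : ℤ) ≤ i → i ≤ (M : ℤ) →
      ∀ x ∈ Set.Icc (0 : ℝ) 1, G (z i) + g i * (x - z i) ≤ G x)
    (hgmono : ∀ i j : ℤ, -(M : ℤ) ≤ i → i ≤ j → j ≤ (M : ℤ) → g i ≤ g j)
    (hgnonneg : 0 ≤ g (-(M : ℤ)))
    -- Ghat is 0 on the first segment, slope g i on [z i, z (i+1)]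
    (hGhat0 : ∀ x ∈ Set.Icc (z (-(M : ℤ) - 1)) (z (-(M : ℤ))), Ghat x = 0)
    (hGhatseg : ∀ i : ℤ, -(M : ℤ) ≤ i → i ≤ (M : ℤ) →
      ∀ x ∈ Set.Icc (z i) (z (i + 1)), Ghat x = Ghat (z i) + g i * (x - z i)) :
    (∀ x ∈ Set.Icc (0 : ℝ) 1, Ghat x ≤ G x) ∧
      (∀ x ∈ Set.Icc (0 : ℝ) 1, ∀ y ∈ Set.Icc (0 : ℝ) 1, x ≤ y →
        G x - Ghat x ≤ G y - Ghat y) := by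
  
  have hz01 : ∀ i : ℤ, -(M:ℤ) - 1 ≤ i → i ≤ (M:ℤ) + 1 → z i ∈ Set.Icc (0:ℝ) 1 := by
    intro i h1 h2
    constructor
    · rw [← hzfirst]; exact hzmono _ _ le_rfl h1 h2
    · rw [← hzlast]; exact hzmono _ _ h1 h2 le_rfl
  -- On each segment, G grows at least with slope g i
  have seg : ∀ i : ℤ, -(M:ℤ) ≤ i → i ≤ (M:ℤ) → ∀ x ∈ Set.Icc (0:ℝ) 1,
      ∀ y ∈ Set.Icc (0:ℝ) 1, z i ≤ x → x ≤ y → G x + g i * (y - x) ≤ G y := by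
    intro i hi1 hi2 x hx y hy hzx hxy
    rcases eq_or_lt_of_le hzx with h | h
    · have h2 := hsub i hi1 hi2 y hy
      rw [h] at h2
      linarith
    · rcases eq_or_lt_of_le hxy with h2 | h2
      · rw [← h2]; ring_nf; rfl
      · have hzi := hz01 i (by linarith) (by linarith)
        have hslope := hGconv.slope_mono_adjacent hzi hy h h2
        have hsx := hsub i hi1 hi2 x hx
        have h3 : g i ≤ (G x - G (z i)) / (x - z i) :=
          (le_div_iff₀ (by linarith)).mpr (by linarith)
        have h4 : g i ≤ (G y - G x) / (y - x) := h3.trans hslope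
        have h5 := (le_div_iff₀ (by linarith)).mp h4
        linarith
  have hzM0 : (0:ℝ) ≤ z (-(M:ℤ)) := by
    rw [← hzfirst]; exact hzmono _ _ le_rfl (by linarith) (by linarith)
  have hGhatz0 : Ghat 0 = 0 := by
    apply hGhat0
    rw [hzfirst]; exact ⟨le_rfl, hzM0⟩
  -- main monotonicity of D = G - Ghat, inductively up to z (-M-1+n)
  have key : ∀ n : ℕ, (n : ℤ) ≤ 2*M + 2 → ∀ x ∈ Set.Icc (0:ℝ) 1, ∀ y ∈ Set.Icc (0:ℝ) 1,
      x ≤ y → y ≤ z (-(M:ℤ) - 1 + n) → G x - Ghat x ≤ G y - Ghat y := by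
    intro n
    induction n with
    | zero =>
      intro _ x hx y hy hxy hyz
      simp only [Nat.cast_zero, add_zero] at hyz
      rw [hzfirst] at hyz
      have hx0 : x = 0 := le_antisymm (hxy.trans hyz) hx.1
      have hy0 : y = 0 := le_antisymm hyz hy.1
      rw [hx0, hy0]
    | succ n ih =>
      intro hn x hx y hy hxy hyz
      rcases Nat.eq_zero_or_pos n with hn0 | hnpos
      · -- flat segment [z(-M-1), z(-M)]
        subst hn0
        push_cast at hyz
        have hx' : x ≤ z (-(M:ℤ) - 1 + 1) := hxy.trans hyz
        have hmem : ∀ w : ℝ, w ∈ Set.Icc (0:ℝ) 1 → w ≤ z (-(M:ℤ) - 1 + 1) →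
            w ∈ Set.Icc (z (-(M:ℤ) - 1)) (z (-(M:ℤ))) := by
          intro w hw hwz
          rw [hzfirst]
          refine ⟨hw.1, ?_⟩
          have : -(M:ℤ) - 1 + 1 = -(M:ℤ) := by ring
          rwa [this] at hwz
        rw [hGhat0 x (hmem x hx hx'), hGhat0 y (hmem y hy hyz)]
        have := hGmono hx hy hxy
        linarith
      · -- segment with slope index i = -M-1+n
        set i : ℤ := -(M:ℤ) - 1 + n with hi
        have hi1 : -(M:ℤ) ≤ i := by
          have : (1:ℤ) ≤ n := by exact_mod_cast hnpos
          omega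
        have hi2 : i ≤ (M:ℤ) := by
          have : ((n:ℤ)+1) ≤ 2*M + 2 := by push_cast at hn ⊢; linarith
          omega
        have hii : -(M:ℤ) - 1 + (n+1 : ℕ) = i + 1 := by push_cast; ring
        rw [hii] at hyz
        by_cases hyi : y ≤ z i
        · exact ih (by push_cast at hn ⊢; linarith) x hx y hy hxy hyi
        · push_neg at hyi
          have hzi01 := hz01 i (by linarith) (by linarith)
          -- the in-segment step: for a b in [z i, z (i+1)] ∩ [0,1], a ≤ b, D a ≤ D b
          have instep : ∀ a ∈ Set.Icc (0:ℝ) 1, ∀ b ∈ Set.Icc (0:ℝ) 1,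
              z i ≤ a → a ≤ b → b ≤ z (i+1) → G a - Ghat a ≤ G b - Ghat b := by
            intro a ha b hb hza hab hbz
            rw [hGhatseg i hi1 hi2 a ⟨hza, hab.trans hbz⟩,
                hGhatseg i hi1 hi2 b ⟨hza.trans hab, hbz⟩]
            have := seg i hi1 hi2 a ha b hb hza hab
            linarith [this, mul_sub (g i) b a, mul_sub (g i) a (z i), mul_sub (g i) b (z i)]
          by_cases hxi : z i ≤ x
          · exact instep x hx y hy hxi hxy hyz
          · push_neg at hxi
            have h1 : G x - Ghat x ≤ G (z i) - Ghat (z i) :=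
              ih (by push_cast at hn ⊢; linarith) x hx (z i) hzi01 hxi.le le_rfl
            have h2 : G (z i) - Ghat (z i) ≤ G y - Ghat y :=
              instep (z i) hzi01 y hy le_rfl hyi.le hyz
            linarith
  have keyfull : ∀ x ∈ Set.Icc (0:ℝ) 1, ∀ y ∈ Set.Icc (0:ℝ) 1, x ≤ y →
      G x - Ghat x ≤ G y - Ghat y := by
    intro x hx y hy hxy
    have hcast : -(M:ℤ) - 1 + ((2*M+2 : ℕ) : ℤ) = (M:ℤ) + 1 := by push_cast; ring
    refine key (2*M+2) (by push_cast; linarith) x hx y hy hxy ?_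
    rw [hcast, hzlast]; exact hy.2
  constructor
  · intro x hx
    have := keyfull 0 (by norm_num) x hx hx.1
    rw [hG0, hGhatz0] at this
    linarith
  · exact keyfull
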